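/- arXiv:cond-mat/0702145 — 2 statements merged into one kernel-verified Lean document; each statement's English description precedes it below -/
import Mathlib

section
/- Vertical growth of the GG model from an occupied rectangle: let a ≤ b and c ≤ d be integers, let R = ([a,b] × [c,d]) ∩ ℤ², and suppose A ⊇ R. If there exist x₁, x₂ ∈ [a,b] with 1 ≤ x₂ − x₁ ≤ 4 such that (x₁, d+1) ∈ A and (x₂, d+1) ∈ A (two occupied sites in the adjacent row with no more than 3 empty sites in between), then the whole adjacent row segment ([a,b] ∩ ℤ) × {d+1} is contained in ⟨A⟩ (and symmetrically for growth in the Southern direction). -/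
open MeasureTheory Set

abbrev Site : Type := ℤ × ℤ
abbrev Config : Type := Site → Bool

def ggN : Set Site := {(1,0), (2,0), (-1,0), (-2,0), (0,1), (0,-1)}

def ggT (A : Set Site) : Set Site :=
  A ∪ {x : Site | 3 ≤ (((x + ·) '' ggN) ∩ A).ncard}

def ggClosure (A : Set Site) : Set Site := ⋃ n : ℕ, ggT^[n] A

def ggTRes (V A : Set Site) : Set Site :=
  A ∪ {x : Site | x ∈ V ∧ 3 ≤ (((x + ·) '' ggN) ∩ A).ncard}

def ggClosureRes (V A : Set Site) : Set Site := ⋃ n : ℕ, (ggTRes V)^[n] A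

def InternallySpanned (V A₀ : Set Site) : Prop :=
  ggClosureRes V (A₀ ∩ V) = V

def occupied (ω : Config) : Set Site := {x | ω x = true}

def IsBernoulli (p : ℝ) (μ : Measure Config) : Prop :=
  IsProbabilityMeasure μ ∧
  ProbabilityTheory.iIndepFun (fun (x : Site) (ω : Config) => ω x) μ ∧
  ∀ x : Site, μ {ω | ω x = true} = ENNReal.ofReal p


lemma ggN_finite : ggN.Finite := by
  unfold ggN
  exact (((((Set.finite_singleton _).insert _).insert _).insert _).insert _).insert _

lemma ggT_mono {A B : Set Site} (h : A ⊆ B) : ggT A ⊆ ggT B := by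
  intro x hx
  rcases hx with hx | hx
  · exact Or.inl (h hx)
  · refine Or.inr (le_trans hx (Set.ncard_le_ncard (Set.inter_subset_inter_right _ h) ?_))
    exact ((ggN_finite.image _).inter_of_left _)

lemma ggT_iter_mono (A : Set Site) : Monotone (fun n => ggT^[n] A) := by
  apply monotone_nat_of_le_succ
  intro n
  induction n with
  | zero =>
    simp only [Function.iterate_zero, Function.iterate_one, id]
    exact Set.subset_union_left
  | succ n ih =>
    rw [Function.iterate_succ_apply', Function.iterate_succ_apply']
    exact ggT_mono ih

lemma subset_ggClosure (A : Set Site) : A ⊆ ggClosure A :=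
  fun x hx => Set.mem_iUnion.mpr ⟨0, hx⟩

lemma gg_step {A : Set Site} {x u v w : Site}
    (hu : u ∈ ggN) (hv : v ∈ ggN) (hw : w ∈ ggN)
    (huv : u ≠ v) (huw : u ≠ w) (hvw : v ≠ w)
    (h1 : x + u ∈ ggClosure A) (h2 : x + v ∈ ggClosure A)
    (h3 : x + w ∈ ggClosure A) : x ∈ ggClosure A := by
  rw [ggClosure, Set.mem_iUnion] at h1 h2 h3 ⊢
  obtain ⟨n1, h1⟩ := h1; obtain ⟨n2, h2⟩ := h2; obtain ⟨n3, h3⟩ := h3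
  set N := max n1 (max n2 n3) with hN
  refine ⟨N + 1, ?_⟩
  rw [Function.iterate_succ_apply']
  refine Set.mem_union_right _ ?_
  simp only [Set.mem_setOf_eq]
  have hsub : ({x + u, x + v, x + w} : Set Site) ⊆ ((x + ·) '' ggN) ∩ ggT^[N] A := by
    intro y hy
    simp only [Set.mem_insert_iff, Set.mem_singleton_iff] at hy
    rcases hy with rfl | rfl | rfl
    · exact ⟨⟨u, hu, rfl⟩, ggT_iter_mono A (le_max_left _ _) h1⟩
    · exact ⟨⟨v, hv, rfl⟩, ggT_iter_mono A (le_trans (le_max_left _ _) (le_max_right _ _)) h2⟩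
    · exact ⟨⟨w, hw, rfl⟩, ggT_iter_mono A (le_trans (le_max_right _ _) (le_max_right _ _)) h3⟩
  have h3card : ({x + u, x + v, x + w} : Set Site).ncard = 3 := by
    rw [Set.ncard_eq_three]
    exact ⟨_, _, _, by simpa using huv, by simpa using huw, by simpa using hvw, rfl⟩
  calc (3 : ℕ) = _ := h3card.symm
    _ ≤ _ := Set.ncard_le_ncard hsub ((ggN_finite.image _).inter_of_left _)

lemma gg_row (A : Set Site) (a b r s : ℤ) (hs : (((0:ℤ), s) : Site) ∈ ggN) (hs0 : s ≠ 0)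
    (hbase : ∀ x ∈ Set.Icc a b, ((x, r + s) : Site) ∈ ggClosure A)
    {x₁ x₂ : ℤ} (h1 : x₁ ∈ Set.Icc a b) (h2 : x₂ ∈ Set.Icc a b)
    (hk1 : 1 ≤ x₂ - x₁) (hk4 : x₂ - x₁ ≤ 4)
    (hA1 : ((x₁, r) : Site) ∈ ggClosure A) (hA2 : ((x₂, r) : Site) ∈ ggClosure A) :
    ∀ x ∈ Set.Icc a b, ((x, r) : Site) ∈ ggClosure A := by
  obtain ⟨ha1, hb1⟩ := h1
  obtain ⟨ha2, hb2⟩ := h2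
  have key : ∀ x y₁ y₂ : ℤ, a ≤ x → x ≤ b → y₁ ≠ y₂ →
      (y₁ - x = 1 ∨ y₁ - x = 2 ∨ y₁ - x = -1 ∨ y₁ - x = -2) →
      (y₂ - x = 1 ∨ y₂ - x = 2 ∨ y₂ - x = -1 ∨ y₂ - x = -2) →
      ((y₁, r) : Site) ∈ ggClosure A → ((y₂, r) : Site) ∈ ggClosure A →
      ((x, r) : Site) ∈ ggClosure A := by
    intro x y₁ y₂ hax hxb hne hd1 hd2 hy1 hy2
    refine gg_step (x := ((x, r) : Site)) (u := (y₁ - x, 0)) (v := (y₂ - x, 0))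
      (w := ((0:ℤ), s)) ?_ ?_ ?_ ?_ ?_ ?_ ?_ ?_ ?_
    · rcases hd1 with h | h | h | h <;> rw [h] <;> simp [ggN]
    · rcases hd2 with h | h | h | h <;> rw [h] <;> simp [ggN]
    · exact hs
    · intro h; injection h with h' _; exact hne (by omega)
    · intro h; injection h with h' h''; exact hs0 h''.symm
    · intro h; injection h with h' h''; exact hs0 h''.symm
    · rw [Prod.mk_add_mk, add_zero, show x + (y₁ - x) = y₁ from by ring]; exact hy1
    · rw [Prod.mk_add_mk, add_zero, show x + (y₂ - x) = y₂ from by ring]; exact hy2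
    · rw [Prod.mk_add_mk, add_zero]
      exact hbase x ⟨hax, hxb⟩
  have hP : ∀ y : ℤ, a ≤ y → y + 1 ≤ b → ((y, r) : Site) ∈ ggClosure A →
      ((y + 1, r) : Site) ∈ ggClosure A →
      ∀ x ∈ Set.Icc a b, ((x, r) : Site) ∈ ggClosure A := by
    intro y hay hyb hPy hPy1 x hx
    obtain ⟨hax, hxb⟩ := hx
    have left : ∀ n : ℕ, ∀ x : ℤ, a ≤ x → y - x = n → ((x, r) : Site) ∈ ggClosure A := by
      intro n
      induction n using Nat.strong_induction_on with
      | _ n ih =>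
        intro x hax2 hxn
        match n, hxn with
        | 0, hxn => rw [show x = y from by omega]; exact hPy
        | 1, hxn =>
          refine key x (x + 1) (x + 2) hax2 (by omega) (by omega) (by omega) (by omega) ?_ ?_
          · rw [show x + 1 = y from by omega]; exact hPy
          · rw [show x + 2 = y + 1 from by omega]; exact hPy1
        | (m + 2), hxn =>
          refine key x (x + 1) (x + 2) hax2 (by omega) (by omega) (by omega) (by omega) ?_ ?_
          · exact ih (m + 1) (by omega) (x + 1) (by omega) (by omega)
          · exact ih m (by omega) (x + 2) (by omega) (by omega)
    have right : ∀ n : ℕ, ∀ x : ℤ, x ≤ b → x - y = n → ((x, r) : Site) ∈ ggClosure A := by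
      intro n
      induction n using Nat.strong_induction_on with
      | _ n ih =>
        intro x hxb2 hxn
        match n, hxn with
        | 0, hxn => rw [show x = y from by omega]; exact hPy
        | 1, hxn => rw [show x = y + 1 from by omega]; exact hPy1
        | (m + 2), hxn =>
          refine key x (x - 1) (x - 2) (by omega) hxb2 (by omega) (by omega) (by omega) ?_ ?_
          · exact ih (m + 1) (by omega) (x - 1) (by omega) (by omega)
          · exact ih m (by omega) (x - 2) (by omega) (by omega)
    rcases le_or_gt x y with h | h
    · exact left (y - x).toNat x hax (by omega)
    · exact right (x - y).toNat x hxb (by omega)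
  have hcase : x₂ - x₁ = 1 ∨ x₂ - x₁ = 2 ∨ x₂ - x₁ = 3 ∨ x₂ - x₁ = 4 := by omega
  rcases hcase with h | h | h | h
  · refine hP x₁ ha1 (by omega) hA1 ?_
    rw [show x₁ + 1 = x₂ from by omega]; exact hA2
  · have hm : ((x₁ + 1, r) : Site) ∈ ggClosure A :=
      key (x₁ + 1) x₁ x₂ (by omega) (by omega) (by omega) (by omega) (by omega) hA1 hA2
    exact hP x₁ ha1 (by omega) hA1 hm
  · have hm : ((x₁ + 1, r) : Site) ∈ ggClosure A :=
      key (x₁ + 1) x₁ x₂ (by omega) (by omega) (by omega) (by omega) (by omega) hA1 hA2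
    exact hP x₁ ha1 (by omega) hA1 hm
  · have hm2 : ((x₁ + 2, r) : Site) ∈ ggClosure A :=
      key (x₁ + 2) x₁ x₂ (by omega) (by omega) (by omega) (by omega) (by omega) hA1 hA2
    have hm1 : ((x₁ + 1, r) : Site) ∈ ggClosure A :=
      key (x₁ + 1) x₁ (x₁ + 2) (by omega) (by omega) (by omega) (by omega) (by omega) hA1 hm2
    exact hP x₁ ha1 (by omega) hA1 hm1

theorem gg_vertical_growth (a b c d : ℤ) (hab : a ≤ b) (hcd : c ≤ d)
    (A : Set Site) (hR : Set.Icc a b ×ˢ Set.Icc c d ⊆ A) :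
    ((∃ x₁ ∈ Set.Icc a b, ∃ x₂ ∈ Set.Icc a b, 1 ≤ x₂ - x₁ ∧ x₂ - x₁ ≤ 4 ∧
        ((x₁, d+1) : Site) ∈ A ∧ ((x₂, d+1) : Site) ∈ A) →
        Set.Icc a b ×ˢ ({d+1} : Set ℤ) ⊆ ggClosure A) ∧
    ((∃ x₁ ∈ Set.Icc a b, ∃ x₂ ∈ Set.Icc a b, 1 ≤ x₂ - x₁ ∧ x₂ - x₁ ≤ 4 ∧
        ((x₁, c-1) : Site) ∈ A ∧ ((x₂, c-1) : Site) ∈ A) →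
        Set.Icc a b ×ˢ ({c-1} : Set ℤ) ⊆ ggClosure A) := by
  constructor
  · rintro ⟨x₁, h1, x₂, h2, hk1, hk4, hA1, hA2⟩ z hz
    obtain ⟨z1, z2⟩ := z
    simp only [Set.mem_prod, Set.mem_singleton_iff] at hz
    obtain ⟨hz1, hz2⟩ := hz
    subst hz2
    have hbase : ∀ x ∈ Set.Icc a b, ((x, (d + 1) + (-1)) : Site) ∈ ggClosure A := by
      intro x hx
      rw [show d + 1 + (-1) = d from by ring]
      exact subset_ggClosure A (hR ⟨hx, ⟨hcd, le_refl d⟩⟩)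
    exact gg_row A a b (d + 1) (-1) (by simp [ggN]) (by norm_num) hbase h1 h2 hk1 hk4
      (subset_ggClosure A hA1) (subset_ggClosure A hA2) z1 hz1
  · rintro ⟨x₁, h1, x₂, h2, hk1, hk4, hA1, hA2⟩ z hz
    obtain ⟨z1, z2⟩ := z
    simp only [Set.mem_prod, Set.mem_singleton_iff] at hz
    obtain ⟨hz1, hz2⟩ := hz
    subst hz2
    have hbase : ∀ x ∈ Set.Icc a b, ((x, (c - 1) + 1) : Site) ∈ ggClosure A := by
      intro x hx
      rw [show c - 1 + 1 = c from by ring]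
      exact subset_ggClosure A (hR ⟨hx, ⟨le_refl c, hcd⟩⟩)
    exact gg_row A a b (c - 1) 1 (by simp [ggN]) (by norm_num) hbase h1 h2 hk1 hk4
      (subset_ggClosure A hA1) (subset_ggClosure A hA2) z1 hz1
end

section
/- Unbounded growth from a large occupied rectangle: there is a constant c > 0 (one may take any c large enough) such that for all sufficiently small p ∈ (0,1), if N₁ ≥ c·(1/p)·log(1/p) and N₂ ≥ c·(1/p²)·log(1/p), R is a fully occupied rectangle of height N₁ and width N₂, and the initial set is A₀ = R ∪ Π(p), then the ℙ_p-probability that ⟨A₀⟩ = ℤ² is at least ∏_{k=1}^{∞} (1 − (1−p²)^{N₂+k}) · (1 − (1−p)^{N₁+k}). -/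
open MeasureTheory Set

lemma ggT_subset (A : Set Site) : A ⊆ ggT A := Set.subset_union_left

lemma ggT_iterate_mono (A : Set Site) {m n : ℕ} (h : m ≤ n) : ggT^[m] A ⊆ ggT^[n] A := by
  induction n with
  | zero => simpa [Nat.le_zero.mp h] using subset_rfl
  | succ n ih =>
    rcases Nat.lt_or_ge m (n+1) with h' | h'
    · refine (ih (by omega)).trans ?_
      rw [Function.iterate_succ_apply']
      exact ggT_subset _
    · have : m = n + 1 := by omega
      simp [this]

lemma mem_ggClosure_of (A : Set Site) (n : ℕ) {x : Site} (h : x ∈ ggT^[n] A) :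
    x ∈ ggClosure A := Set.mem_iUnion.mpr ⟨n, h⟩

lemma ggClosure_step {A : Set Site} {x d₁ d₂ d₃ : Site}
    (h₁ : d₁ ∈ ggN) (h₂ : d₂ ∈ ggN) (h₃ : d₃ ∈ ggN)
    (h12 : d₁ ≠ d₂) (h13 : d₁ ≠ d₃) (h23 : d₂ ≠ d₃)
    (m₁ : x + d₁ ∈ ggClosure A) (m₂ : x + d₂ ∈ ggClosure A) (m₃ : x + d₃ ∈ ggClosure A) :
    x ∈ ggClosure A := by
  obtain ⟨n₁, hn₁⟩ := Set.mem_iUnion.mp m₁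
  obtain ⟨n₂, hn₂⟩ := Set.mem_iUnion.mp m₂
  obtain ⟨n₃, hn₃⟩ := Set.mem_iUnion.mp m₃
  set N := max n₁ (max n₂ n₃) with hN
  have H₁ : x + d₁ ∈ ggT^[N] A := ggT_iterate_mono A (le_max_left _ _) hn₁
  have H₂ : x + d₂ ∈ ggT^[N] A :=
    ggT_iterate_mono A ((le_max_left _ _).trans (le_max_right _ _)) hn₂
  have H₃ : x + d₃ ∈ ggT^[N] A :=
    ggT_iterate_mono A ((le_max_right _ _).trans (le_max_right _ _)) hn₃
  apply mem_ggClosure_of A (N+1)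
  rw [Function.iterate_succ_apply']
  right
  show 3 ≤ (((x + ·) '' ggN) ∩ ggT^[N] A).ncard
  have hsub : ({x + d₁, x + d₂, x + d₃} : Set Site) ⊆ ((x + ·) '' ggN) ∩ ggT^[N] A := by
    rintro z (rfl | rfl | rfl)
    · exact ⟨⟨d₁, h₁, rfl⟩, H₁⟩
    · exact ⟨⟨d₂, h₂, rfl⟩, H₂⟩
    · exact ⟨⟨d₃, h₃, rfl⟩, H₃⟩
  have hfin : (((x + ·) '' ggN) ∩ ggT^[N] A).Finite :=
    (ggN_finite.image _).inter_of_left _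
  have e12 : x + d₁ ≠ x + d₂ := by simpa using h12
  have e13 : x + d₁ ≠ x + d₃ := by simpa using h13
  have e23 : x + d₂ ≠ x + d₃ := by simpa using h23
  have hcard : ({x + d₁, x + d₂, x + d₃} : Set Site).ncard = 3 := by
    rw [Set.ncard_insert_of_notMem (by simp [e12, e13]), Set.ncard_pair e23]
  calc (3:ℕ) = ({x + d₁, x + d₂, x + d₃} : Set Site).ncard := hcard.symm
    _ ≤ _ := Set.ncard_le_ncard hsub hfin

lemma mem_shift {A : Set Site} {u v : Site} (h : u = v) (hv : v ∈ ggClosure A) :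
    u ∈ ggClosure A := h ▸ hv

lemma pair_eq (i y u v : ℤ) (h1 : i + u = a') (h2 : y + v = b') :
    ((i, y) : Site) + (u, v) = (a', b') := by
  rw [Prod.mk_add_mk, h1, h2]

section Steps
variable {A : Set Site} {i y : ℤ}

lemma stepL (h1 : ((i-1, y):Site) ∈ ggClosure A) (h2 : ((i-2, y):Site) ∈ ggClosure A)
    (h3 : ((i, y-1):Site) ∈ ggClosure A) : ((i, y):Site) ∈ ggClosure A :=
  ggClosure_step (d₁ := (-1,0)) (d₂ := (-2,0)) (d₃ := (0,-1))
    (by simp [ggN]) (by simp [ggN]) (by simp [ggN]) (by decide) (by decide) (by decide)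
    (mem_shift (pair_eq _ _ _ _ (by ring) (by ring)) h1)
    (mem_shift (pair_eq _ _ _ _ (by ring) (by ring)) h2)
    (mem_shift (pair_eq _ _ _ _ (by ring) (by ring)) h3)

lemma stepL' (h1 : ((i-1, y):Site) ∈ ggClosure A) (h2 : ((i-2, y):Site) ∈ ggClosure A)
    (h3 : ((i, y+1):Site) ∈ ggClosure A) : ((i, y):Site) ∈ ggClosure A :=
  ggClosure_step (d₁ := (-1,0)) (d₂ := (-2,0)) (d₃ := (0,1))
    (by simp [ggN]) (by simp [ggN]) (by simp [ggN]) (by decide) (by decide) (by decide)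
    (mem_shift (pair_eq _ _ _ _ (by ring) (by ring)) h1)
    (mem_shift (pair_eq _ _ _ _ (by ring) (by ring)) h2)
    (mem_shift (pair_eq _ _ _ _ (by ring) (by ring)) h3)

lemma stepR (h1 : ((i+1, y):Site) ∈ ggClosure A) (h2 : ((i+2, y):Site) ∈ ggClosure A)
    (h3 : ((i, y-1):Site) ∈ ggClosure A) : ((i, y):Site) ∈ ggClosure A :=
  ggClosure_step (d₁ := (1,0)) (d₂ := (2,0)) (d₃ := (0,-1))
    (by simp [ggN]) (by simp [ggN]) (by simp [ggN]) (by decide) (by decide) (by decide)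
    (mem_shift (pair_eq _ _ _ _ (by ring) (by ring)) h1)
    (mem_shift (pair_eq _ _ _ _ (by ring) (by ring)) h2)
    (mem_shift (pair_eq _ _ _ _ (by ring) (by ring)) h3)

lemma stepR' (h1 : ((i+1, y):Site) ∈ ggClosure A) (h2 : ((i+2, y):Site) ∈ ggClosure A)
    (h3 : ((i, y+1):Site) ∈ ggClosure A) : ((i, y):Site) ∈ ggClosure A :=
  ggClosure_step (d₁ := (1,0)) (d₂ := (2,0)) (d₃ := (0,1))
    (by simp [ggN]) (by simp [ggN]) (by simp [ggN]) (by decide) (by decide) (by decide)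
    (mem_shift (pair_eq _ _ _ _ (by ring) (by ring)) h1)
    (mem_shift (pair_eq _ _ _ _ (by ring) (by ring)) h2)
    (mem_shift (pair_eq _ _ _ _ (by ring) (by ring)) h3)

lemma stepM (h1 : ((i-1, y):Site) ∈ ggClosure A) (h2 : ((i+1, y):Site) ∈ ggClosure A)
    (h3 : ((i, y-1):Site) ∈ ggClosure A) : ((i, y):Site) ∈ ggClosure A :=
  ggClosure_step (d₁ := (-1,0)) (d₂ := (1,0)) (d₃ := (0,-1))
    (by simp [ggN]) (by simp [ggN]) (by simp [ggN]) (by decide) (by decide) (by decide)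
    (mem_shift (pair_eq _ _ _ _ (by ring) (by ring)) h1)
    (mem_shift (pair_eq _ _ _ _ (by ring) (by ring)) h2)
    (mem_shift (pair_eq _ _ _ _ (by ring) (by ring)) h3)

lemma stepM' (h1 : ((i-1, y):Site) ∈ ggClosure A) (h2 : ((i+1, y):Site) ∈ ggClosure A)
    (h3 : ((i, y+1):Site) ∈ ggClosure A) : ((i, y):Site) ∈ ggClosure A :=
  ggClosure_step (d₁ := (-1,0)) (d₂ := (1,0)) (d₃ := (0,1))
    (by simp [ggN]) (by simp [ggN]) (by simp [ggN]) (by decide) (by decide) (by decide)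
    (mem_shift (pair_eq _ _ _ _ (by ring) (by ring)) h1)
    (mem_shift (pair_eq _ _ _ _ (by ring) (by ring)) h2)
    (mem_shift (pair_eq _ _ _ _ (by ring) (by ring)) h3)

lemma stepM2 (h1 : ((i-1, y):Site) ∈ ggClosure A) (h2 : ((i+2, y):Site) ∈ ggClosure A)
    (h3 : ((i, y-1):Site) ∈ ggClosure A) : ((i, y):Site) ∈ ggClosure A :=
  ggClosure_step (d₁ := (-1,0)) (d₂ := (2,0)) (d₃ := (0,-1))
    (by simp [ggN]) (by simp [ggN]) (by simp [ggN]) (by decide) (by decide) (by decide)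
    (mem_shift (pair_eq _ _ _ _ (by ring) (by ring)) h1)
    (mem_shift (pair_eq _ _ _ _ (by ring) (by ring)) h2)
    (mem_shift (pair_eq _ _ _ _ (by ring) (by ring)) h3)

lemma stepM2' (h1 : ((i-1, y):Site) ∈ ggClosure A) (h2 : ((i+2, y):Site) ∈ ggClosure A)
    (h3 : ((i, y+1):Site) ∈ ggClosure A) : ((i, y):Site) ∈ ggClosure A :=
  ggClosure_step (d₁ := (-1,0)) (d₂ := (2,0)) (d₃ := (0,1))
    (by simp [ggN]) (by simp [ggN]) (by simp [ggN]) (by decide) (by decide) (by decide)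
    (mem_shift (pair_eq _ _ _ _ (by ring) (by ring)) h1)
    (mem_shift (pair_eq _ _ _ _ (by ring) (by ring)) h2)
    (mem_shift (pair_eq _ _ _ _ (by ring) (by ring)) h3)

end Steps

lemma mem_shift' {A : Set Site} {a' b' : ℤ} (hv : ((a', b'):Site) ∈ ggClosure A)
    {a b : ℤ} (h1 : a = a') (h2 : b = b') : ((a, b):Site) ∈ ggClosure A := by
  rw [h1, h2]; exact hv

section Spread
variable {A : Set Site}

lemma spread_right (x₁ x₂ y₁ y₂ m : ℤ) (hy : y₁ ≤ y₂)
    (hrect : ∀ u v : ℤ, x₁ ≤ u → u ≤ x₂ → y₁ ≤ v → v ≤ y₂ → ((u,v):Site) ∈ ggClosure A)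
    (hm : x₁ ≤ m)
    (h0 : ((m, y₂+1):Site) ∈ ggClosure A) (h1 : ((m+1, y₂+1):Site) ∈ ggClosure A) :
    ∀ d : ℕ, m + (d:ℤ) ≤ x₂ → ((m + (d:ℤ), y₂+1):Site) ∈ ggClosure A := by
  intro d
  induction d using Nat.strong_induction_on with | _ d ih => ?_
  intro h
  match d with
  | 0 => simpa using h0
  | 1 => simpa using h1
  | (d+2) =>
    have hc : (((d:ℕ)+2 : ℕ) : ℤ) = (d:ℤ)+2 := by push_cast; ring
    rw [hc] at h ⊢
    have r1 : ((m + (d:ℤ) + 1, y₂+1):Site) ∈ ggClosure A :=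
      mem_shift' (ih (d+1) (by omega) (by push_cast; omega)) (by push_cast; ring) rfl
    have r0 : ((m + (d:ℤ), y₂+1):Site) ∈ ggClosure A := ih d (by omega) (by omega)
    apply stepL
    · exact mem_shift' r1 (by ring) rfl
    · exact mem_shift' r0 (by ring) rfl
    · exact mem_shift' (hrect (m + (d:ℤ) + 2) y₂ (by omega) (by omega) (by omega) le_rfl)
        (by ring) (by ring)

lemma spread_left (x₁ x₂ y₁ y₂ m : ℤ) (hy : y₁ ≤ y₂)
    (hrect : ∀ u v : ℤ, x₁ ≤ u → u ≤ x₂ → y₁ ≤ v → v ≤ y₂ → ((u,v):Site) ∈ ggClosure A)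
    (hm : m + 1 ≤ x₂)
    (h0 : ((m, y₂+1):Site) ∈ ggClosure A) (h1 : ((m+1, y₂+1):Site) ∈ ggClosure A) :
    ∀ d : ℕ, x₁ ≤ m - (d:ℤ) → ((m - (d:ℤ), y₂+1):Site) ∈ ggClosure A := by
  intro d
  induction d using Nat.strong_induction_on with | _ d ih => ?_
  intro h
  match d with
  | 0 => simpa using h0
  | 1 =>
    apply stepR
    · exact mem_shift' h0 (by push_cast; ring) rfl
    · exact mem_shift' h1 (by push_cast; ring) rfl
    · exact mem_shift' (hrect (m - 1) y₂ (by push_cast at h; omega) (by omega) (by omega) le_rfl)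
        (by push_cast; ring) (by ring)
  | (d+2) =>
    have hc : (((d:ℕ)+2 : ℕ) : ℤ) = (d:ℤ)+2 := by push_cast; ring
    rw [hc] at h ⊢
    have r1 : ((m - ((d:ℤ) + 1), y₂+1):Site) ∈ ggClosure A :=
      mem_shift' (ih (d+1) (by omega) (by push_cast; omega)) (by push_cast; ring) rfl
    have r0 : ((m - (d:ℤ), y₂+1):Site) ∈ ggClosure A := ih d (by omega) (by omega)
    apply stepR
    · exact mem_shift' r1 (by ring) rfl
    · exact mem_shift' r0 (by ring) rfl
    · exact mem_shift' (hrect (m - ((d:ℤ)+2)) y₂ (by omega) (by omega) (by omega) le_rfl)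
        (by ring) (by ring)

lemma row_up (x₁ x₂ y₁ y₂ j₁ j₂ : ℤ) (hy : y₁ ≤ y₂)
    (hrect : ∀ u v : ℤ, x₁ ≤ u → u ≤ x₂ → y₁ ≤ v → v ≤ y₂ → ((u,v):Site) ∈ ggClosure A)
    (hj₁ : x₁ ≤ j₁) (hj₂ : j₂ ≤ x₂) (hlt : j₁ < j₂) (hle : j₂ ≤ j₁ + 3)
    (o₁ : ((j₁, y₂+1):Site) ∈ ggClosure A) (o₂ : ((j₂, y₂+1):Site) ∈ ggClosure A) :
    ∀ u v : ℤ, x₁ ≤ u → u ≤ x₂ → y₁ ≤ v → v ≤ y₂+1 → ((u,v):Site) ∈ ggClosure A := by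
  have hpair : ((j₁ + 1, y₂+1):Site) ∈ ggClosure A := by
    rcases (by omega : j₂ = j₁ + 1 ∨ j₂ = j₁ + 2 ∨ j₂ = j₁ + 3) with h | h | h
    · rwa [← h]
    · apply stepM
      · exact mem_shift' o₁ (by ring) rfl
      · exact mem_shift' o₂ (by omega) rfl
      · exact mem_shift' (hrect (j₁+1) y₂ (by omega) (by omega) (by omega) le_rfl) rfl (by ring)
    · apply stepM2
      · exact mem_shift' o₁ (by ring) rfl
      · exact mem_shift' o₂ (by omega) rfl
      · exact mem_shift' (hrect (j₁+1) y₂ (by omega) (by omega) (by omega) le_rfl) rfl (by ring)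
  intro u v hu1 hu2 hv1 hv2
  rcases (by omega : v ≤ y₂ ∨ v = y₂ + 1) with h | rfl
  · exact hrect u v hu1 hu2 hv1 h
  · rcases le_or_gt u j₁ with h | h
    · exact mem_shift'
        (spread_left x₁ x₂ y₁ y₂ j₁ hy hrect (by omega) o₁ hpair (j₁ - u).toNat (by omega))
        (by omega) rfl
    · exact mem_shift'
        (spread_right x₁ x₂ y₁ y₂ j₁ hy hrect hj₁ o₁ hpair (u - j₁).toNat (by omega))
        (by omega) rfl

lemma spread_right_down (x₁ x₂ y₁ y₂ m : ℤ) (hy : y₁ ≤ y₂)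
    (hrect : ∀ u v : ℤ, x₁ ≤ u → u ≤ x₂ → y₁ ≤ v → v ≤ y₂ → ((u,v):Site) ∈ ggClosure A)
    (hm : x₁ ≤ m)
    (h0 : ((m, y₁-1):Site) ∈ ggClosure A) (h1 : ((m+1, y₁-1):Site) ∈ ggClosure A) :
    ∀ d : ℕ, m + (d:ℤ) ≤ x₂ → ((m + (d:ℤ), y₁-1):Site) ∈ ggClosure A := by
  intro d
  induction d using Nat.strong_induction_on with | _ d ih => ?_
  intro h
  match d with
  | 0 => simpa using h0
  | 1 => simpa using h1
  | (d+2) =>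
    have hc : (((d:ℕ)+2 : ℕ) : ℤ) = (d:ℤ)+2 := by push_cast; ring
    rw [hc] at h ⊢
    have r1 : ((m + (d:ℤ) + 1, y₁-1):Site) ∈ ggClosure A :=
      mem_shift' (ih (d+1) (by omega) (by push_cast; omega)) (by push_cast; ring) rfl
    have r0 : ((m + (d:ℤ), y₁-1):Site) ∈ ggClosure A := ih d (by omega) (by omega)
    apply stepL'
    · exact mem_shift' r1 (by ring) rfl
    · exact mem_shift' r0 (by ring) rfl
    · exact mem_shift' (hrect (m + (d:ℤ) + 2) y₁ (by omega) (by omega) le_rfl (by omega))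
        (by ring) (by ring)

lemma spread_left_down (x₁ x₂ y₁ y₂ m : ℤ) (hy : y₁ ≤ y₂)
    (hrect : ∀ u v : ℤ, x₁ ≤ u → u ≤ x₂ → y₁ ≤ v → v ≤ y₂ → ((u,v):Site) ∈ ggClosure A)
    (hm : m + 1 ≤ x₂)
    (h0 : ((m, y₁-1):Site) ∈ ggClosure A) (h1 : ((m+1, y₁-1):Site) ∈ ggClosure A) :
    ∀ d : ℕ, x₁ ≤ m - (d:ℤ) → ((m - (d:ℤ), y₁-1):Site) ∈ ggClosure A := by
  intro d
  induction d using Nat.strong_induction_on with | _ d ih => ?_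
  intro h
  match d with
  | 0 => simpa using h0
  | 1 =>
    apply stepR'
    · exact mem_shift' h0 (by push_cast; ring) rfl
    · exact mem_shift' h1 (by push_cast; ring) rfl
    · exact mem_shift' (hrect (m - 1) y₁ (by push_cast at h; omega) (by omega) le_rfl (by omega))
        (by push_cast; ring) (by ring)
  | (d+2) =>
    have hc : (((d:ℕ)+2 : ℕ) : ℤ) = (d:ℤ)+2 := by push_cast; ring
    rw [hc] at h ⊢
    have r1 : ((m - ((d:ℤ) + 1), y₁-1):Site) ∈ ggClosure A :=
      mem_shift' (ih (d+1) (by omega) (by push_cast; omega)) (by push_cast; ring) rfl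
    have r0 : ((m - (d:ℤ), y₁-1):Site) ∈ ggClosure A := ih d (by omega) (by omega)
    apply stepR'
    · exact mem_shift' r1 (by ring) rfl
    · exact mem_shift' r0 (by ring) rfl
    · exact mem_shift' (hrect (m - ((d:ℤ)+2)) y₁ (by omega) (by omega) le_rfl (by omega))
        (by ring) (by ring)

lemma row_down (x₁ x₂ y₁ y₂ j₁ j₂ : ℤ) (hy : y₁ ≤ y₂)
    (hrect : ∀ u v : ℤ, x₁ ≤ u → u ≤ x₂ → y₁ ≤ v → v ≤ y₂ → ((u,v):Site) ∈ ggClosure A)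
    (hj₁ : x₁ ≤ j₁) (hj₂ : j₂ ≤ x₂) (hlt : j₁ < j₂) (hle : j₂ ≤ j₁ + 3)
    (o₁ : ((j₁, y₁-1):Site) ∈ ggClosure A) (o₂ : ((j₂, y₁-1):Site) ∈ ggClosure A) :
    ∀ u v : ℤ, x₁ ≤ u → u ≤ x₂ → y₁-1 ≤ v → v ≤ y₂ → ((u,v):Site) ∈ ggClosure A := by
  have hpair : ((j₁ + 1, y₁-1):Site) ∈ ggClosure A := by
    rcases (by omega : j₂ = j₁ + 1 ∨ j₂ = j₁ + 2 ∨ j₂ = j₁ + 3) with h | h | h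
    · rwa [← h]
    · apply stepM'
      · exact mem_shift' o₁ (by ring) rfl
      · exact mem_shift' o₂ (by omega) rfl
      · exact mem_shift' (hrect (j₁+1) y₁ (by omega) (by omega) le_rfl (by omega)) rfl (by ring)
    · apply stepM2'
      · exact mem_shift' o₁ (by ring) rfl
      · exact mem_shift' o₂ (by omega) rfl
      · exact mem_shift' (hrect (j₁+1) y₁ (by omega) (by omega) le_rfl (by omega)) rfl (by ring)
  intro u v hu1 hu2 hv1 hv2
  rcases (by omega : y₁ ≤ v ∨ v = y₁ - 1) with h | rfl
  · exact hrect u v hu1 hu2 h hv2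
  · rcases le_or_gt u j₁ with h | h
    · exact mem_shift'
        (spread_left_down x₁ x₂ y₁ y₂ j₁ hy hrect (by omega) o₁ hpair (j₁ - u).toNat (by omega))
        (by omega) rfl
    · exact mem_shift'
        (spread_right_down x₁ x₂ y₁ y₂ j₁ hy hrect hj₁ o₁ hpair (u - j₁).toNat (by omega))
        (by omega) rfl

lemma col_right (x₁ x₂ y₁ y₂ j : ℤ) (hx : x₁ + 1 ≤ x₂)
    (hrect : ∀ u v : ℤ, x₁ ≤ u → u ≤ x₂ → y₁ ≤ v → v ≤ y₂ → ((u,v):Site) ∈ ggClosure A)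
    (hj1 : y₁ ≤ j) (hj2 : j ≤ y₂) (o : ((x₂+1, j):Site) ∈ ggClosure A) :
    ∀ u v : ℤ, x₁ ≤ u → u ≤ x₂+1 → y₁ ≤ v → v ≤ y₂ → ((u,v):Site) ∈ ggClosure A := by
  have up : ∀ d : ℕ, j + (d:ℤ) ≤ y₂ → ((x₂+1, j + (d:ℤ)):Site) ∈ ggClosure A := by
    intro d
    induction d with
    | zero => intro _; simpa using o
    | succ d ih =>
      intro h
      have hc : (((d:ℕ)+1 : ℕ) : ℤ) = (d:ℤ)+1 := by push_cast; ring
      rw [hc] at h ⊢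
      apply stepL
      · exact mem_shift' (hrect x₂ (j + (d:ℤ) + 1) (by omega) le_rfl (by omega) (by omega))
          (by ring) (by ring)
      · exact mem_shift' (hrect (x₂-1) (j + (d:ℤ) + 1) (by omega) (by omega) (by omega) (by omega))
          (by ring) (by ring)
      · exact mem_shift' (ih (by omega)) rfl (by ring)
  have dn : ∀ d : ℕ, y₁ ≤ j - (d:ℤ) → ((x₂+1, j - (d:ℤ)):Site) ∈ ggClosure A := by
    intro d
    induction d with
    | zero => intro _; simpa using o
    | succ d ih =>
      intro h
      have hc : (((d:ℕ)+1 : ℕ) : ℤ) = (d:ℤ)+1 := by push_cast; ring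
      rw [hc] at h ⊢
      apply stepL'
      · exact mem_shift' (hrect x₂ (j - ((d:ℤ) + 1)) (by omega) le_rfl (by omega) (by omega))
          (by ring) rfl
      · exact mem_shift' (hrect (x₂-1) (j - ((d:ℤ) + 1)) (by omega) (by omega) (by omega) (by omega))
          (by ring) rfl
      · exact mem_shift' (ih (by omega)) rfl (by ring)
  intro u v hu1 hu2 hv1 hv2
  rcases (by omega : u ≤ x₂ ∨ u = x₂ + 1) with h | rfl
  · exact hrect u v hu1 h hv1 hv2
  · rcases le_or_gt j v with h | h
    · exact mem_shift' (up (v - j).toNat (by omega)) rfl (by omega)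
    · exact mem_shift' (dn (j - v).toNat (by omega)) rfl (by omega)

lemma col_left (x₁ x₂ y₁ y₂ j : ℤ) (hx : x₁ + 1 ≤ x₂)
    (hrect : ∀ u v : ℤ, x₁ ≤ u → u ≤ x₂ → y₁ ≤ v → v ≤ y₂ → ((u,v):Site) ∈ ggClosure A)
    (hj1 : y₁ ≤ j) (hj2 : j ≤ y₂) (o : ((x₁-1, j):Site) ∈ ggClosure A) :
    ∀ u v : ℤ, x₁-1 ≤ u → u ≤ x₂ → y₁ ≤ v → v ≤ y₂ → ((u,v):Site) ∈ ggClosure A := by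
  have up : ∀ d : ℕ, j + (d:ℤ) ≤ y₂ → ((x₁-1, j + (d:ℤ)):Site) ∈ ggClosure A := by
    intro d
    induction d with
    | zero => intro _; simpa using o
    | succ d ih =>
      intro h
      have hc : (((d:ℕ)+1 : ℕ) : ℤ) = (d:ℤ)+1 := by push_cast; ring
      rw [hc] at h ⊢
      apply stepR
      · exact mem_shift' (hrect x₁ (j + (d:ℤ) + 1) le_rfl (by omega) (by omega) (by omega))
          (by ring) (by ring)
      · exact mem_shift' (hrect (x₁+1) (j + (d:ℤ) + 1) (by omega) (by omega) (by omega) (by omega))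
          (by ring) (by ring)
      · exact mem_shift' (ih (by omega)) rfl (by ring)
  have dn : ∀ d : ℕ, y₁ ≤ j - (d:ℤ) → ((x₁-1, j - (d:ℤ)):Site) ∈ ggClosure A := by
    intro d
    induction d with
    | zero => intro _; simpa using o
    | succ d ih =>
      intro h
      have hc : (((d:ℕ)+1 : ℕ) : ℤ) = (d:ℤ)+1 := by push_cast; ring
      rw [hc] at h ⊢
      apply stepR'
      · exact mem_shift' (hrect x₁ (j - ((d:ℤ) + 1)) le_rfl (by omega) (by omega) (by omega))
          (by ring) rfl
      · exact mem_shift' (hrect (x₁+1) (j - ((d:ℤ) + 1)) (by omega) (by omega) (by omega) (by omega))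
          (by ring) rfl
      · exact mem_shift' (ih (by omega)) rfl (by ring)
  intro u v hu1 hu2 hv1 hv2
  rcases (by omega : x₁ ≤ u ∨ u = x₁ - 1) with h | rfl
  · exact hrect u v h hu2 hv1 hv2
  · rcases le_or_gt j v with h | h
    · exact mem_shift' (up (v - j).toNat (by omega)) rfl (by omega)
    · exact mem_shift' (dn (j - v).toNat (by omega)) rfl (by omega)

end Spread

/-! Stage geometry -/

def X1 (a : ℤ) (k : ℕ) : ℤ := a - ((k / 2 : ℕ) : ℤ)
def X2 (a : ℤ) (N₂ : ℕ) (k : ℕ) : ℤ := a + (N₂:ℤ) - 1 + (((k+1) / 2 : ℕ) : ℤ)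
def Y1 (b : ℤ) (k : ℕ) : ℤ := b - ((k / 2 : ℕ) : ℤ)
def Y2 (b : ℤ) (N₁ : ℕ) (k : ℕ) : ℤ := b + (N₁:ℤ) - 1 + (((k+1) / 2 : ℕ) : ℤ)
def yRow (b : ℤ) (N₁ : ℕ) (k : ℕ) : ℤ := if k % 2 = 0 then Y2 b N₁ k + 1 else Y1 b k - 1
def xCol (a : ℤ) (N₂ : ℕ) (k : ℕ) : ℤ := if k % 2 = 0 then X2 a N₂ k + 1 else X1 a k - 1
def cLo (b : ℤ) (k : ℕ) : ℤ := if k % 2 = 0 then Y1 b k else Y1 b k - 1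
def cHi (b : ℤ) (N₁ : ℕ) (k : ℕ) : ℤ := if k % 2 = 0 then Y2 b N₁ k + 1 else Y2 b N₁ k
def nB (N₂ : ℕ) (k : ℕ) : ℕ := (N₂ + k - 2) / 4
def bStart (a : ℤ) (k : ℕ) (i : ℕ) : ℤ := X1 a k + 1 + 4 * (i:ℤ)

def RowEv (a b : ℤ) (N₁ N₂ : ℕ) (k : ℕ) (ω : Config) : Prop :=
  ∃ i < nB N₂ k, ∃ t₁ t₂ : ℤ, 0 ≤ t₁ ∧ t₁ < t₂ ∧ t₂ ≤ 3 ∧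
    ω (bStart a k i + t₁, yRow b N₁ k) = true ∧ ω (bStart a k i + t₂, yRow b N₁ k) = true

def ColEv (a b : ℤ) (N₁ N₂ : ℕ) (k : ℕ) (ω : Config) : Prop :=
  ∃ y : ℤ, cLo b k ≤ y ∧ y ≤ cHi b N₁ k ∧ ω (xCol a N₂ k, y) = true

lemma master (a b : ℤ) (N₁ N₂ : ℕ) (hN₁ : 1 ≤ N₁) (hN₂ : 30 ≤ N₂) (ω : Config)
    (hS : ∀ k, RowEv a b N₁ N₂ k ω ∧ ColEv a b N₁ N₂ k ω) :
    ggClosure ((Set.Icc a (a+(N₂:ℤ)-1) ×ˢ Set.Icc b (b+(N₁:ℤ)-1)) ∪ occupied ω) = Set.univ := by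
  set A : Set Site := (Set.Icc a (a+(N₂:ℤ)-1) ×ˢ Set.Icc b (b+(N₁:ℤ)-1)) ∪ occupied ω with hA
  have hocc : ∀ x : Site, ω x = true → x ∈ ggClosure A := by
    intro x hx
    exact subset_ggClosure A (Or.inr hx)
  have key : ∀ k, ∀ u v : ℤ, X1 a k ≤ u → u ≤ X2 a N₂ k → Y1 b k ≤ v → v ≤ Y2 b N₁ k →
      ((u,v):Site) ∈ ggClosure A := by
    intro k
    induction k with
    | zero =>
      intro u v h1 h2 h3 h4
      apply subset_ggClosure A
      left
      constructor
      · simp only [Set.mem_Icc]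
        constructor
        · simpa [X1] using h1
        · simpa [X2] using h2
      · simp only [Set.mem_Icc]
        constructor
        · simpa [Y1] using h3
        · simpa [Y2] using h4
    | succ k ih =>
      obtain ⟨hrow, hcol⟩ := hS k
      obtain ⟨i, hi, t₁, t₂, ht₁, hlt, ht₂, hω₁, hω₂⟩ := hrow
      obtain ⟨ycol, hy1, hy2, hωc⟩ := hcol
      have h4B : 4 * (nB N₂ k : ℤ) ≤ (N₂:ℤ) + k - 2 := by
        have := Nat.div_mul_le_self (N₂ + k - 2) 4
        simp only [nB]; omega
      rcases Nat.even_or_odd k with he | ho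
      · -- k even : grow top, then right
        have hk2 : k % 2 = 0 := Nat.even_iff.mp he
        have hyR : yRow b N₁ k = Y2 b N₁ k + 1 := by simp [yRow, hk2]
        have hxC : xCol a N₂ k = X2 a N₂ k + 1 := by simp [xCol, hk2]
        have hcL : cLo b k = Y1 b k := by simp [cLo, hk2]
        have hcH : cHi b N₁ k = Y2 b N₁ k + 1 := by simp [cHi, hk2]
        rw [hyR] at hω₁ hω₂
        rw [hxC] at hωc
        rw [hcL] at hy1
        rw [hcH] at hy2
        have hrect1 := row_up (X1 a k) (X2 a N₂ k) (Y1 b k) (Y2 b N₁ k)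
          (bStart a k i + t₁) (bStart a k i + t₂)
          (by simp only [Y1, Y2]; omega) ih
          (by simp only [bStart]; omega)
          (by simp only [bStart, X2, X1] at *; omega)
          (by omega) (by omega) (hocc _ hω₁) (hocc _ hω₂)
        have hrect2 := col_right (X1 a k) (X2 a N₂ k) (Y1 b k) (Y2 b N₁ k + 1) ycol
          (by simp only [X1, X2]; omega) hrect1 hy1 hy2 (hocc _ hωc)
        intro u v h1 h2 h3 h4
        apply hrect2 u v
        · simp only [X1] at h1 ⊢; omega
        · simp only [X2] at h2 ⊢; omega
        · simp only [Y1] at h3 ⊢; omega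
        · simp only [Y2] at h4 ⊢; omega
      · -- k odd : grow bottom, then left
        have hk2 : k % 2 = 1 := Nat.odd_iff.mp ho
        have hk2' : ¬ (k % 2 = 0) := by omega
        have hyR : yRow b N₁ k = Y1 b k - 1 := by simp [yRow, hk2']
        have hxC : xCol a N₂ k = X1 a k - 1 := by simp [xCol, hk2']
        have hcL : cLo b k = Y1 b k - 1 := by simp [cLo, hk2']
        have hcH : cHi b N₁ k = Y2 b N₁ k := by simp [cHi, hk2']
        rw [hyR] at hω₁ hω₂
        rw [hxC] at hωc
        rw [hcL] at hy1
        rw [hcH] at hy2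
        have hrect1 := row_down (X1 a k) (X2 a N₂ k) (Y1 b k) (Y2 b N₁ k)
          (bStart a k i + t₁) (bStart a k i + t₂)
          (by simp only [Y1, Y2]; omega) ih
          (by simp only [bStart]; omega)
          (by simp only [bStart, X2, X1] at *; omega)
          (by omega) (by omega) (hocc _ hω₁) (hocc _ hω₂)
        have hrect2 := col_left (X1 a k) (X2 a N₂ k) (Y1 b k - 1) (Y2 b N₁ k) ycol
          (by simp only [X1, X2]; omega)
          (fun u v hu1 hu2 hv1 hv2 => hrect1 u v hu1 hu2 hv1 hv2)
          hy1 hy2 (hocc _ hωc)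
        intro u v h1 h2 h3 h4
        apply hrect2 u v
        · simp only [X1] at h1 ⊢; omega
        · simp only [X2] at h2 ⊢; omega
        · simp only [Y1] at h3 ⊢; omega
        · simp only [Y2] at h4 ⊢; omega
  ext x
  simp only [Set.mem_univ, iff_true]
  obtain ⟨u, v⟩ := x
  set m : ℕ := ((a - u).toNat + (u - (a + (N₂:ℤ) - 1)).toNat +
    (b - v).toNat + (v - (b + (N₁:ℤ) - 1)).toNat) with hm
  have := key (2 * m) u v
  simp only [X1, X2, Y1, Y2] at this
  apply this <;> omega

/-! Measure-theory infrastructure -/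

open ProbabilityTheory

lemma measurableSet_all {ι : Type*} [Finite ι] (F : Set (ι → Bool)) : MeasurableSet F :=
  (Set.toFinite F).countable.measurableSet

def Det (E : Set Config) (D : Finset Site) : Prop :=
  ∀ ω ω' : Config, (∀ x ∈ D, ω x = ω' x) → ω ∈ E → ω' ∈ E

lemma Det.compl {E : Set Config} {D : Finset Site} (h : Det E D) : Det Eᶜ D := by
  intro ω ω' hag hω hmem
  exact hω (h ω' ω (fun x hx => (hag x hx).symm) hmem)

lemma Det.inter {E₁ E₂ : Set Config} {D₁ D₂ : Finset Site} (h₁ : Det E₁ D₁) (h₂ : Det E₂ D₂)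
    (hD : D₁ ⊆ D₂) : Det (E₁ ∩ E₂) D₂ := by
  intro ω ω' hag hω
  exact ⟨h₁ ω ω' (fun x hx => hag x (hD hx)) hω.1, h₂ ω ω' hag hω.2⟩

lemma Det.mono {E : Set Config} {D D' : Finset Site} (h : Det E D) (hD : D ⊆ D') : Det E D' :=
  fun ω ω' hag => h ω ω' (fun x hx => hag x (hD hx))

def restr (D : Finset Site) : Config → (D → Bool) := fun ω i => ω i

lemma measurable_restr (D : Finset Site) : Measurable (restr D) :=
  measurable_pi_lambda _ (fun i => measurable_pi_apply _)

lemma Det.eq_preimage {E : Set Config} {D : Finset Site} (h : Det E D) :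
    E = restr D ⁻¹' (restr D '' E) := by
  ext ω
  constructor
  · exact fun hω => ⟨ω, hω, rfl⟩
  · rintro ⟨ω', hω', hres⟩
    refine h ω' ω (fun x hx => ?_) hω'
    exact congrFun hres ⟨x, hx⟩

lemma Det.measurableSet {E : Set Config} {D : Finset Site} (h : Det E D) : MeasurableSet E := by
  rw [h.eq_preimage]
  exact measurable_restr D (measurableSet_all _)

lemma det_indep {p : ℝ} {μ : Measure Config} (hμ : IsBernoulli p μ)
    {E₁ E₂ : Set Config} {D₁ D₂ : Finset Site}
    (h₁ : Det E₁ D₁) (h₂ : Det E₂ D₂) (hD : Disjoint D₁ D₂) :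
    μ (E₁ ∩ E₂) = μ E₁ * μ E₂ := by
  have hind := hμ.2.1.indepFun_finset D₁ D₂ hD (fun x => measurable_pi_apply x)
  have h1' := h₁.eq_preimage
  have h2' := h₂.eq_preimage
  have := hind.measure_inter_preimage_eq_mul (restr D₁ '' E₁) (restr D₂ '' E₂)
    (measurableSet_all _) (measurableSet_all _)
  rw [h1', h2']
  exact this

lemma meas_single_true {p : ℝ} {μ : Measure Config} (hμ : IsBernoulli p μ) (x : Site) :
    μ ((fun ω : Config => ω x) ⁻¹' {true}) = ENNReal.ofReal p := by
  have he : ((fun ω : Config => ω x) ⁻¹' {true}) = {ω : Config | ω x = true} := by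
    ext ω; simp
  rw [he]; exact hμ.2.2 x

lemma meas_single_false {p : ℝ} {μ : Measure Config} (hμ : IsBernoulli p μ) (x : Site) :
    μ ((fun ω : Config => ω x) ⁻¹' {false}) = 1 - ENNReal.ofReal p := by
  haveI := hμ.1
  have hc : ((fun ω : Config => ω x) ⁻¹' {false}) = ((fun ω : Config => ω x) ⁻¹' {true})ᶜ := by
    ext ω; simp
  rw [hc, measure_compl ((measurable_pi_apply x) (by trivial)) (measure_ne_top μ _),
    measure_univ, meas_single_true hμ]

lemma meas_cyl {p : ℝ} {μ : Measure Config} (hμ : IsBernoulli p μ) (D : Finset Site)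
    (g : Site → Bool) :
    μ {ω : Config | ∀ x ∈ D, ω x = g x} =
      ∏ x ∈ D, (if g x then ENNReal.ofReal p else 1 - ENNReal.ofReal p) := by
  have hset : {ω : Config | ∀ x ∈ D, ω x = g x} =
      ⋂ x ∈ D, (fun ω : Config => ω x) ⁻¹' {g x} := by
    ext ω
    simp only [Set.mem_setOf_eq, Set.mem_iInter, Set.mem_preimage, Set.mem_singleton_iff]
  rw [hset]
  rw [hμ.2.1.measure_inter_preimage_eq_mul D (sets := fun x => {g x}) (fun _ _ => trivial)]
  refine Finset.prod_congr rfl (fun x _ => ?_)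
  cases hx : g x
  · rw [if_neg (by simp)]; exact meas_single_false hμ x
  · rw [if_pos rfl]; exact meas_single_true hμ x

lemma prod_inter {p : ℝ} {μ : Measure Config} (hμ : IsBernoulli p μ)
    (Reg : ℕ → Finset Site) (E : ℕ → Set Config)
    (hdet : ∀ i, Det (E i) (Reg i)) (hdisj : ∀ i j, i ≠ j → Disjoint (Reg i) (Reg j)) :
    ∀ J : ℕ, μ (⋂ i ∈ Finset.range J, E i) = ∏ i ∈ Finset.range J, μ (E i) := by
  haveI := hμ.1
  intro J
  induction J with
  | zero => simp
  | succ J ih =>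
    have hbig : Det (⋂ i ∈ Finset.range J, E i) ((Finset.range J).biUnion Reg) := by
      intro ω ω' hag hω
      simp only [Set.mem_iInter] at hω ⊢
      intro i hi
      exact hdet i ω ω' (fun x hx => hag x (Finset.mem_biUnion.mpr ⟨i, hi, hx⟩)) (hω i hi)
    have hdisj' : Disjoint ((Finset.range J).biUnion Reg) (Reg J) := by
      rw [Finset.disjoint_biUnion_left]
      intro i hi
      exact hdisj i J (by simp at hi; omega)
    rw [Finset.range_add_one]
    rw [Finset.prod_insert (by simp), Finset.set_biInter_insert]
    rw [Set.inter_comm]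
    rw [det_indep hμ hbig (hdet J) hdisj']
    rw [ih, mul_comm]

/-! Events and regions -/

def SRow (a b : ℤ) (N₁ N₂ : ℕ) (k : ℕ) : Set Config := {ω | RowEv a b N₁ N₂ k ω}
def SCol (a b : ℤ) (N₁ N₂ : ℕ) (k : ℕ) : Set Config := {ω | ColEv a b N₁ N₂ k ω}

noncomputable def rowRegion (a b : ℤ) (N₁ N₂ : ℕ) (k : ℕ) : Finset Site :=
  (Finset.Icc (X1 a k + 1) (X1 a k + 4 * (nB N₂ k : ℤ))) ×ˢ {yRow b N₁ k}

noncomputable def colRegion (a b : ℤ) (N₁ N₂ : ℕ) (k : ℕ) : Finset Site :=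
  {xCol a N₂ k} ×ˢ Finset.Icc (cLo b k) (cHi b N₁ k)

noncomputable def blockRegion (a b : ℤ) (N₁ N₂ : ℕ) (k : ℕ) (i : ℕ) : Finset Site :=
  (Finset.Icc (bStart a k i) (bStart a k i + 3)) ×ˢ {yRow b N₁ k}

def blockFail (a b : ℤ) (N₁ N₂ : ℕ) (k : ℕ) (i : ℕ) : Set Config :=
  {ω | ¬ ∃ t₁ t₂ : ℤ, 0 ≤ t₁ ∧ t₁ < t₂ ∧ t₂ ≤ 3 ∧
     ω (bStart a k i + t₁, yRow b N₁ k) = true ∧ ω (bStart a k i + t₂, yRow b N₁ k) = true}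

lemma det_SRow (a b : ℤ) (N₁ N₂ : ℕ) (k : ℕ) :
    Det (SRow a b N₁ N₂ k) (rowRegion a b N₁ N₂ k) := by
  intro ω ω' hag hω
  obtain ⟨i, hi, t₁, t₂, h1, h2, h3, h4, h5⟩ := hω
  have hmem : ∀ t : ℤ, 0 ≤ t → t ≤ 3 →
      ((bStart a k i + t, yRow b N₁ k) : Site) ∈ rowRegion a b N₁ N₂ k := by
    intro t ha hb
    simp only [rowRegion, Finset.mem_product, Finset.mem_Icc, Finset.mem_singleton, bStart]
    refine ⟨⟨by omega, ?_⟩, trivial⟩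
    have : (i:ℤ) + 1 ≤ (nB N₂ k : ℤ) := by exact_mod_cast hi
    omega
  refine ⟨i, hi, t₁, t₂, h1, h2, h3, ?_, ?_⟩
  · rw [← hag _ (hmem t₁ h1 (by omega))]; exact h4
  · rw [← hag _ (hmem t₂ (by omega) h3)]; exact h5

lemma det_SCol (a b : ℤ) (N₁ N₂ : ℕ) (k : ℕ) :
    Det (SCol a b N₁ N₂ k) (colRegion a b N₁ N₂ k) := by
  intro ω ω' hag hω
  obtain ⟨y, h1, h2, h3⟩ := hω
  refine ⟨y, h1, h2, ?_⟩
  rw [← hag _ ?_]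
  · exact h3
  · simp only [colRegion, Finset.mem_product, Finset.mem_Icc, Finset.mem_singleton]
    exact ⟨trivial, h1, h2⟩

lemma det_blockFail (a b : ℤ) (N₁ N₂ : ℕ) (k : ℕ) (i : ℕ) :
    Det (blockFail a b N₁ N₂ k i) (blockRegion a b N₁ N₂ k i) := by
  intro ω ω' hag hω hex
  apply hω
  obtain ⟨t₁, t₂, h1, h2, h3, h4, h5⟩ := hex
  have hmem : ∀ t : ℤ, 0 ≤ t → t ≤ 3 →
      ((bStart a k i + t, yRow b N₁ k) : Site) ∈ blockRegion a b N₁ N₂ k i := by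
    intro t ha hb
    simp only [blockRegion, Finset.mem_product, Finset.mem_Icc, Finset.mem_singleton]
    exact ⟨⟨by omega, by omega⟩, trivial⟩
  refine ⟨t₁, t₂, h1, h2, h3, ?_, ?_⟩
  · rw [hag _ (hmem t₁ h1 (by omega))]; exact h4
  · rw [hag _ (hmem t₂ (by omega) h3)]; exact h5

lemma srow_compl (a b : ℤ) (N₁ N₂ : ℕ) (k : ℕ) :
    (SRow a b N₁ N₂ k)ᶜ = ⋂ i ∈ Finset.range (nB N₂ k), blockFail a b N₁ N₂ k i := by
  ext ω
  simp only [SRow, RowEv, Set.mem_compl_iff, Set.mem_setOf_eq, Set.mem_iInter,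
    Finset.mem_range, blockFail]
  constructor
  · intro h i hi hex
    exact h ⟨i, hi, hex⟩
  · rintro h ⟨i, hi, hex⟩
    exact h i hi hex

/-! Disjointness of regions -/

lemma yRow_even {b : ℤ} {N₁ k : ℕ} (hk : k % 2 = 0) :
    yRow b N₁ k = b + (N₁:ℤ) + ((k/2 : ℕ) : ℤ) := by
  rw [yRow, if_pos hk, Y2]
  have h2 : ((k+1)/2 : ℕ) = k/2 := by omega
  rw [h2]; ring

lemma yRow_odd {b : ℤ} {N₁ k : ℕ} (hk : k % 2 = 1) :
    yRow b N₁ k = b - ((k/2 : ℕ) : ℤ) - 1 := by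
  rw [yRow, if_neg (by omega), Y1]

lemma xCol_even {a : ℤ} {N₂ k : ℕ} (hk : k % 2 = 0) :
    xCol a N₂ k = a + (N₂:ℤ) + ((k/2 : ℕ) : ℤ) := by
  rw [xCol, if_pos hk, X2]
  have h2 : ((k+1)/2 : ℕ) = k/2 := by omega
  rw [h2]; ring

lemma xCol_odd {a : ℤ} {N₂ k : ℕ} (hk : k % 2 = 1) :
    xCol a N₂ k = a - ((k/2 : ℕ) : ℤ) - 1 := by
  rw [xCol, if_neg (by omega), X1]

lemma cHi_eq (b : ℤ) (N₁ k : ℕ) : cHi b N₁ k = b + (N₁:ℤ) + ((k/2 : ℕ) : ℤ) := by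
  rcases Nat.even_or_odd k with hk | hk
  · have hk := Nat.even_iff.mp hk
    rw [cHi, if_pos hk, Y2]
    have h2 : ((k+1)/2 : ℕ) = k/2 := by omega
    rw [h2]; ring
  · have hk := Nat.odd_iff.mp hk
    rw [cHi, if_neg (by omega), Y2]
    have h2 : ((k+1)/2 : ℕ) = k/2 + 1 := by omega
    rw [h2]; push_cast; ring

lemma cLo_even {b : ℤ} {k : ℕ} (hk : k % 2 = 0) : cLo b k = b - ((k/2 : ℕ) : ℤ) := by
  rw [cLo, if_pos hk, Y1]

lemma cLo_odd {b : ℤ} {k : ℕ} (hk : k % 2 = 1) : cLo b k = b - ((k/2 : ℕ) : ℤ) - 1 := by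
  rw [cLo, if_neg (by omega), Y1]

lemma disj_block (a b : ℤ) (N₁ N₂ : ℕ) (k : ℕ) {i j : ℕ} (hij : i ≠ j) :
    Disjoint (blockRegion a b N₁ N₂ k i) (blockRegion a b N₁ N₂ k j) := by
  rw [Finset.disjoint_left]
  rintro ⟨u, v⟩ h1 h2
  simp only [blockRegion, Finset.mem_product, Finset.mem_Icc, Finset.mem_singleton, bStart]
    at h1 h2
  omega

lemma disj_row_row (a b : ℤ) (N₁ N₂ : ℕ) {k k' : ℕ} (h : k ≠ k') :
    Disjoint (rowRegion a b N₁ N₂ k) (rowRegion a b N₁ N₂ k') := by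
  rw [Finset.disjoint_left]
  rintro ⟨u, v⟩ h1 h2
  simp only [rowRegion, Finset.mem_product, Finset.mem_Icc, Finset.mem_singleton] at h1 h2
  rcases Nat.mod_two_eq_zero_or_one k with hk | hk <;> rcases Nat.mod_two_eq_zero_or_one k' with hk' | hk'
  · rw [yRow_even hk] at h1
    rw [yRow_even hk'] at h2
    omega
  · rw [yRow_even hk] at h1
    rw [yRow_odd hk'] at h2
    omega
  · rw [yRow_odd hk] at h1
    rw [yRow_even hk'] at h2
    omega
  · rw [yRow_odd hk] at h1
    rw [yRow_odd hk'] at h2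
    omega

lemma disj_col_col (a b : ℤ) (N₁ N₂ : ℕ) {k k' : ℕ} (h : k ≠ k') :
    Disjoint (colRegion a b N₁ N₂ k) (colRegion a b N₁ N₂ k') := by
  rw [Finset.disjoint_left]
  rintro ⟨u, v⟩ h1 h2
  simp only [colRegion, Finset.mem_product, Finset.mem_Icc, Finset.mem_singleton] at h1 h2
  rcases Nat.mod_two_eq_zero_or_one k with hk | hk <;> rcases Nat.mod_two_eq_zero_or_one k' with hk' | hk'
  · rw [xCol_even hk] at h1
    rw [xCol_even hk'] at h2
    omega
  · rw [xCol_even hk] at h1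
    rw [xCol_odd hk'] at h2
    omega
  · rw [xCol_odd hk] at h1
    rw [xCol_even hk'] at h2
    omega
  · rw [xCol_odd hk] at h1
    rw [xCol_odd hk'] at h2
    omega

lemma disj_row_col (a b : ℤ) (N₁ N₂ : ℕ) (k k' : ℕ) :
    Disjoint (rowRegion a b N₁ N₂ k) (colRegion a b N₁ N₂ k') := by
  rw [Finset.disjoint_left]
  rintro ⟨u, v⟩ h1 h2
  simp only [rowRegion, colRegion, Finset.mem_product, Finset.mem_Icc, Finset.mem_singleton,
    X1, nB] at h1 h2
  rw [cHi_eq] at h2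
  rcases Nat.mod_two_eq_zero_or_one k with hk | hk <;> rcases Nat.mod_two_eq_zero_or_one k' with hk' | hk'
  · rw [yRow_even hk] at h1
    rw [xCol_even hk', cLo_even hk'] at h2
    omega
  · rw [yRow_even hk] at h1
    rw [xCol_odd hk', cLo_odd hk'] at h2
    omega
  · rw [yRow_odd hk] at h1
    rw [xCol_even hk', cLo_even hk'] at h2
    omega
  · rw [yRow_odd hk] at h1
    rw [xCol_odd hk', cLo_odd hk'] at h2
    omega

/-! Measure computations -/

lemma one_sub_ofReal {x : ℝ} (hx : 0 ≤ x) :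
    ENNReal.ofReal (1 - x) = 1 - ENNReal.ofReal x := by
  rw [ENNReal.ofReal_sub 1 hx, ENNReal.ofReal_one]

lemma poly_ineq {p : ℝ} (h0 : 0 < p) (h1 : p ≤ 1/10) :
    (1-p)^4 + 4*(p*(1-p)^3) ≤ (1-p^2)^5 := by
  have h2 : p^2 ≤ 1/100 := by nlinarith
  have h4 : p^4 ≤ (1/100) * p^2 := by nlinarith [sq_nonneg p]
  have h8 : p^8 ≤ (1/100) * p^2 := by nlinarith [sq_nonneg p, sq_nonneg (p^2), sq_nonneg (p^3), pow_nonneg h0.le 4, pow_nonneg h0.le 6, pow_nonneg h0.le 8]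
  have h6 : (0:ℝ) ≤ p^6 := pow_nonneg h0.le 6
  have key : (1-p^2)^5 - ((1-p)^4 + 4*(p*(1-p)^3)) =
      p^2*(1 - 8*p + 13*p^2 - 10*p^4 + 5*p^6 - p^8) := by ring
  nlinarith [sq_nonneg p, key, h4, h8, h6, h0.le, h1]

lemma card_colRegion (a b : ℤ) (N₁ N₂ : ℕ) (k : ℕ) :
    (colRegion a b N₁ N₂ k).card = N₁ + k + 1 := by
  rw [colRegion, Finset.card_product, Finset.card_singleton, one_mul, Int.card_Icc]
  rw [cHi_eq]
  rcases Nat.mod_two_eq_zero_or_one k with hk | hk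
  · rw [cLo_even hk]; omega
  · rw [cLo_odd hk]; omega

lemma scol_compl (a b : ℤ) (N₁ N₂ : ℕ) (k : ℕ) :
    (SCol a b N₁ N₂ k)ᶜ =
      {ω : Config | ∀ x ∈ colRegion a b N₁ N₂ k, ω x = (fun _ => false) x} := by
  ext ω
  simp only [SCol, ColEv, Set.mem_compl_iff, Set.mem_setOf_eq]
  constructor
  · intro h x hx
    simp only [colRegion, Finset.mem_product, Finset.mem_Icc, Finset.mem_singleton] at hx
    obtain ⟨hu, hv1, hv2⟩ := hx
    by_contra hb
    rw [Bool.not_eq_false] at hb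
    exact h ⟨x.2, hv1, hv2, by rw [← hu]; rw [← hb]⟩
  · rintro h ⟨y, h1, h2, h3⟩
    have := h (xCol a N₂ k, y) (by
      simp only [colRegion, Finset.mem_product, Finset.mem_Icc, Finset.mem_singleton]
      exact ⟨trivial, h1, h2⟩)
    rw [this] at h3
    exact Bool.false_ne_true h3

lemma meas_blockFail_le {p : ℝ} {μ : Measure Config} (hμ : IsBernoulli p μ)
    (h0 : 0 < p) (h1 : p ≤ 1/10) (a b : ℤ) (N₁ N₂ : ℕ) (k i : ℕ) :
    μ (blockFail a b N₁ N₂ k i) ≤ ENNReal.ofReal ((1-p^2)^5) := by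
  haveI := hμ.1
  set s : ℤ := bStart a k i with hs
  set y : ℤ := yRow b N₁ k with hy
  set D : Finset Site := Finset.Icc s (s+3) ×ˢ {y} with hD
  have hmemD : ∀ u v : ℤ, ((u,v) : Site) ∈ D ↔ (s ≤ u ∧ u ≤ s + 3 ∧ v = y) := by
    intro u v
    simp only [hD, Finset.mem_product, Finset.mem_Icc, Finset.mem_singleton]
    tauto
  set gnone : Site → Bool := fun _ => false with hgnone
  set gone : ℤ → Site → Bool := fun t x => decide (x.1 = s + t) with hgone
  have hsub : blockFail a b N₁ N₂ k i ⊆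
      {ω : Config | ∀ x ∈ D, ω x = gnone x} ∪
      ⋃ t ∈ Finset.Icc (0:ℤ) 3, {ω : Config | ∀ x ∈ D, ω x = gone t x} := by
    intro ω hω
    by_cases hex : ∃ t ∈ Finset.Icc (0:ℤ) 3, ω (s + t, y) = true
    · right
      obtain ⟨t0, ht0, htrue⟩ := hex
      simp only [Finset.mem_Icc] at ht0
      refine Set.mem_biUnion (Finset.mem_coe.mpr (Finset.mem_Icc.mpr ht0)) ?_
      rintro ⟨u, v⟩ hx
      rw [hmemD] at hx
      obtain ⟨hu1, hu2, rfl⟩ := hx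
      by_cases hu : u = s + t0
      · subst hu
        simp only [hgone, decide_eq_true_eq]
        simp [htrue]
      · have hdec : gone t0 (u, y) = false := by
          simp only [hgone]
          simp [hu]
        rw [hdec]
        by_contra hb
        rw [Bool.not_eq_false] at hb
        apply hω
        rcases lt_or_gt_of_ne (show u - s ≠ t0 by omega) with hlt | hgt
        · refine ⟨u - s, t0, by omega, by omega, by omega, ?_, htrue⟩
          have : s + (u - s) = u := by ring
          rw [this]; exact hb
        · refine ⟨t0, u - s, by omega, by omega, by omega, htrue, ?_⟩
          have : s + (u - s) = u := by ring
          rw [this]; exact hb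
    · left
      rintro ⟨u, v⟩ hx
      rw [hmemD] at hx
      obtain ⟨hu1, hu2, rfl⟩ := hx
      by_contra hb
      rw [Bool.not_eq_false] at hb
      apply hex
      refine ⟨u - s, by simp only [Finset.mem_Icc]; omega, ?_⟩
      have : s + (u - s) = u := by ring
      rw [this]; exact hb
  set q := ENNReal.ofReal p with hq
  have hcardD : D.card = 4 := by
    rw [hD, Finset.card_product, Finset.card_singleton, mul_one, Int.card_Icc]
    have : s + 3 + 1 - s = 4 := by ring
    rw [this]; rfl
  have hnone : μ {ω : Config | ∀ x ∈ D, ω x = gnone x} = (1 - q)^4 := by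
    rw [meas_cyl hμ D gnone]
    rw [Finset.prod_congr rfl (fun x _ => by simp only [hgnone]; rw [if_neg (by simp)])]
    rw [Finset.prod_const, hcardD]
  have hone : ∀ t ∈ Finset.Icc (0:ℤ) 3,
      μ {ω : Config | ∀ x ∈ D, ω x = gone t x} = q * (1 - q)^3 := by
    intro t ht
    simp only [Finset.mem_Icc] at ht
    rw [meas_cyl hμ D (gone t)]
    have hx0 : ((s + t, y) : Site) ∈ D := by rw [hmemD]; omega
    rw [← Finset.mul_prod_erase D _ hx0]
    have hterm : (if gone t (s + t, y) then q else 1 - q) = q := by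
      simp [hgone]
    rw [hterm]
    congr 1
    rw [Finset.prod_congr rfl (fun x hx => ?_), Finset.prod_const,
      Finset.card_erase_of_mem hx0, hcardD]
    have hxD := Finset.mem_of_mem_erase hx
    have hxne := Finset.ne_of_mem_erase hx
    obtain ⟨u, v⟩ := x
    rw [hmemD] at hxD
    obtain ⟨hu1, hu2, rfl⟩ := hxD
    have : u ≠ s + t := fun hc => hxne (by rw [hc])
    simp [hgone, this, hq]
  calc μ (blockFail a b N₁ N₂ k i)
      ≤ μ ({ω : Config | ∀ x ∈ D, ω x = gnone x} ∪
          ⋃ t ∈ Finset.Icc (0:ℤ) 3, {ω : Config | ∀ x ∈ D, ω x = gone t x}) :=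
        measure_mono hsub
    _ ≤ μ {ω : Config | ∀ x ∈ D, ω x = gnone x} +
          μ (⋃ t ∈ Finset.Icc (0:ℤ) 3, {ω : Config | ∀ x ∈ D, ω x = gone t x}) :=
        measure_union_le _ _
    _ ≤ μ {ω : Config | ∀ x ∈ D, ω x = gnone x} +
          ∑ t ∈ Finset.Icc (0:ℤ) 3, μ {ω : Config | ∀ x ∈ D, ω x = gone t x} := by
        gcongr
        exact measure_biUnion_finset_le _ _
    _ = (1 - q)^4 + ∑ t ∈ Finset.Icc (0:ℤ) 3, (q * (1 - q)^3) := by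
        rw [hnone, Finset.sum_congr rfl hone]
    _ = (1 - q)^4 + 4 * (q * (1 - q)^3) := by
        rw [Finset.sum_const]
        congr 1
        have : (Finset.Icc (0:ℤ) 3).card = 4 := by rw [Int.card_Icc]; rfl
        rw [this]
        rw [nsmul_eq_mul]
        norm_num
    _ ≤ ENNReal.ofReal ((1-p^2)^5) := by
        have h1p : (0:ℝ) ≤ 1 - p := by linarith
        rw [hq, ← one_sub_ofReal h0.le, ← ENNReal.ofReal_pow h1p, ← ENNReal.ofReal_pow h1p,
          ← ENNReal.ofReal_mul h0.le]
        have h4 : (4:ENNReal) = ENNReal.ofReal (4:ℝ) := by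
          rw [ENNReal.ofReal_ofNat]
        rw [h4, ← ENNReal.ofReal_mul (by norm_num), ← ENNReal.ofReal_add (by positivity) (by positivity)]
        exact ENNReal.ofReal_le_ofReal (poly_ineq h0 h1)

lemma pow_le_one_of_base {x : ℝ} (h0 : 0 ≤ x) (h1 : x ≤ 1) (n : ℕ) : x^n ≤ 1 :=
  pow_le_one₀ h0 h1

lemma meas_srow_ge {p : ℝ} {μ : Measure Config} (hμ : IsBernoulli p μ)
    (h0 : 0 < p) (h1 : p ≤ 1/10) (a b : ℤ) (N₁ N₂ : ℕ) (k : ℕ) (hN₂ : 30 ≤ N₂) :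
    ENNReal.ofReal (1 - (1-p^2)^(N₂+k+1)) ≤ μ (SRow a b N₁ N₂ k) := by
  haveI := hμ.1
  have hbase0 : (0:ℝ) ≤ 1 - p^2 := by nlinarith
  have hbase1 : (1:ℝ) - p^2 ≤ 1 := by nlinarith
  have hms : MeasurableSet (SRow a b N₁ N₂ k) := (det_SRow a b N₁ N₂ k).measurableSet
  have hcompl : μ (SRow a b N₁ N₂ k)ᶜ ≤ ENNReal.ofReal ((1-p^2)^(N₂+k+1)) := by
    rw [srow_compl]
    rw [prod_inter hμ (blockRegion a b N₁ N₂ k) (blockFail a b N₁ N₂ k)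
      (det_blockFail a b N₁ N₂ k) (fun i j hij => disj_block a b N₁ N₂ k hij) (nB N₂ k)]
    calc ∏ i ∈ Finset.range (nB N₂ k), μ (blockFail a b N₁ N₂ k i)
        ≤ ∏ _i ∈ Finset.range (nB N₂ k), ENNReal.ofReal ((1-p^2)^5) :=
          Finset.prod_le_prod' (fun i _ => meas_blockFail_le hμ h0 h1 a b N₁ N₂ k i)
      _ = (ENNReal.ofReal ((1-p^2)^5))^(nB N₂ k) := by
          rw [Finset.prod_const, Finset.card_range]
      _ = ENNReal.ofReal ((1-p^2)^(5 * nB N₂ k)) := by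
          rw [← ENNReal.ofReal_pow (by positivity), ← pow_mul]
      _ ≤ ENNReal.ofReal ((1-p^2)^(N₂+k+1)) := by
          apply ENNReal.ofReal_le_ofReal
          apply pow_le_pow_of_le_one hbase0 hbase1
          simp only [nB]
          omega
  have hadd : μ (SRow a b N₁ N₂ k) = 1 - μ (SRow a b N₁ N₂ k)ᶜ := by
    rw [prob_compl_eq_one_sub hms]
    rw [ENNReal.sub_sub_cancel (by norm_num) (prob_le_one)]
  rw [hadd, one_sub_ofReal (by positivity)]
  exact tsub_le_tsub_left hcompl 1

lemma meas_scol_ge {p : ℝ} {μ : Measure Config} (hμ : IsBernoulli p μ)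
    (h0 : 0 < p) (h1 : p ≤ 1/10) (a b : ℤ) (N₁ N₂ : ℕ) (k : ℕ) :
    ENNReal.ofReal (1 - (1-p)^(N₁+k+1)) ≤ μ (SCol a b N₁ N₂ k) := by
  haveI := hμ.1
  have h1p : (0:ℝ) ≤ 1 - p := by linarith
  have hms : MeasurableSet (SCol a b N₁ N₂ k) := (det_SCol a b N₁ N₂ k).measurableSet
  have hcompl : μ (SCol a b N₁ N₂ k)ᶜ ≤ ENNReal.ofReal ((1-p)^(N₁+k+1)) := by
    rw [scol_compl, meas_cyl hμ]
    rw [Finset.prod_congr rfl (fun x _ => by rw [if_neg (by simp)])]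
    rw [Finset.prod_const, card_colRegion]
    rw [← one_sub_ofReal h0.le, ← ENNReal.ofReal_pow h1p]
  have hadd : μ (SCol a b N₁ N₂ k) = 1 - μ (SCol a b N₁ N₂ k)ᶜ := by
    rw [prob_compl_eq_one_sub hms]
    rw [ENNReal.sub_sub_cancel (by norm_num) (prob_le_one)]
  rw [hadd, one_sub_ofReal (by positivity)]
  exact tsub_le_tsub_left hcompl 1

lemma meas_stage_ge {p : ℝ} {μ : Measure Config} (hμ : IsBernoulli p μ)
    (h0 : 0 < p) (h1 : p ≤ 1/10) (a b : ℤ) (N₁ N₂ : ℕ) (k : ℕ) (hN₂ : 30 ≤ N₂) :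
    ENNReal.ofReal ((1 - (1-p^2)^(N₂+k+1)) * (1 - (1-p)^(N₁+k+1))) ≤
      μ (SRow a b N₁ N₂ k ∩ SCol a b N₁ N₂ k) := by
  have hbase0 : (0:ℝ) ≤ 1 - p^2 := by nlinarith
  have hbase1 : (1:ℝ) - p^2 ≤ 1 := by nlinarith
  have hf1 : (0:ℝ) ≤ 1 - (1-p^2)^(N₂+k+1) := by
    have := pow_le_one₀ hbase0 hbase1 (n := N₂+k+1); linarith
  rw [det_indep hμ (det_SRow a b N₁ N₂ k) (det_SCol a b N₁ N₂ k) (disj_row_col a b N₁ N₂ k k)]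
  rw [ENNReal.ofReal_mul hf1]
  exact mul_le_mul' (meas_srow_ge hμ h0 h1 a b N₁ N₂ k hN₂) (meas_scol_ge hμ h0 h1 a b N₁ N₂ k)

/-! Infinite product facts -/

lemma hasProd_of01 (t : ℕ → ℝ) (h0 : ∀ k, 0 ≤ t k) (h1 : ∀ k, t k ≤ 1) :
    HasProd t (⨅ n : ℕ, ∏ k ∈ Finset.range n, t k) := by
  have hbdd : BddBelow (Set.range fun n => ∏ k ∈ Finset.range n, t k) := by
    refine ⟨0, ?_⟩
    rintro x ⟨n, rfl⟩
    exact Finset.prod_nonneg (fun i _ => h0 i)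
  have hlb : ∀ s : Finset ℕ, (⨅ n : ℕ, ∏ k ∈ Finset.range n, t k) ≤ ∏ k ∈ s, t k := by
    intro s
    obtain ⟨M, hM⟩ := s.exists_nat_subset_range
    refine le_trans (ciInf_le hbdd M) ?_
    rw [← Finset.prod_sdiff hM]
    exact mul_le_of_le_one_left (Finset.prod_nonneg (fun i _ => h0 i))
      (Finset.prod_le_one (fun i _ => h0 i) (fun i _ => h1 i))
  rw [HasProd]
  rw [tendsto_order]
  constructor
  · intro x hx
    exact Filter.Eventually.of_forall (fun s => lt_of_lt_of_le hx (hlb s))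
  · intro x hx
    obtain ⟨N, hN⟩ := exists_lt_of_ciInf_lt hx
    rw [SummationFilter.unconditional_filter, Filter.eventually_atTop]
    refine ⟨Finset.range N, fun s hs => ?_⟩
    calc ∏ k ∈ s, t k ≤ ∏ k ∈ Finset.range N, t k := by
          rw [← Finset.prod_sdiff hs]
          exact mul_le_of_le_one_left (Finset.prod_nonneg (fun i _ => h0 i))
            (Finset.prod_le_one (fun i _ => h0 i) (fun i _ => h1 i))
      _ < x := hN

lemma tprod_le_partial (t : ℕ → ℝ) (h0 : ∀ k, 0 ≤ t k) (h1 : ∀ k, t k ≤ 1) (n : ℕ) :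
    ∏' k, t k ≤ ∏ k ∈ Finset.range n, t k := by
  rw [(hasProd_of01 t h0 h1).tprod_eq]
  refine ciInf_le ?_ n
  refine ⟨0, ?_⟩
  rintro x ⟨m, rfl⟩
  exact Finset.prod_nonneg (fun i _ => h0 i)

lemma Det.inter' {E₁ E₂ : Set Config} {D₁ D₂ : Finset Site} (h₁ : Det E₁ D₁) (h₂ : Det E₂ D₂) :
    Det (E₁ ∩ E₂) (D₁ ∪ D₂) := by
  intro ω ω' hag hω
  exact ⟨h₁ ω ω' (fun x hx => hag x (Finset.mem_union_left _ hx)) hω.1,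
    h₂ ω ω' (fun x hx => hag x (Finset.mem_union_right _ hx)) hω.2⟩

theorem gg_unbounded_growth_from_rectangle :
    ∃ c : ℝ, 0 < c ∧ ∃ p₀ : ℝ, 0 < p₀ ∧
      ∀ p : ℝ, 0 < p → p < p₀ →
        ∀ N₁ N₂ : ℕ,
          c * (1/p) * Real.log (1/p) ≤ (N₁ : ℝ) →
          c * (1/p^2) * Real.log (1/p) ≤ (N₂ : ℝ) →
          ∀ a b : ℤ, ∀ μ : Measure Config, IsBernoulli p μ →
            ENNReal.ofReal
                (∏' k : ℕ, ((1 - (1-p^2)^(N₂+k+1)) * (1 - (1-p)^(N₁+k+1)))) ≤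
              μ {ω | ggClosure
                  ((Set.Icc a (a+(N₂:ℤ)-1) ×ˢ Set.Icc b (b+(N₁:ℤ)-1)) ∪ occupied ω)
                  = Set.univ} := by
  refine ⟨100, by norm_num, 1/10, by norm_num, ?_⟩
  intro p hp hpp N₁ N₂ hN₁r hN₂r a b μ hμ
  haveI := hμ.1
  have hinv : (10:ℝ) < 1/p := by
    rw [lt_div_iff₀ hp]; linarith
  have hlog : (1:ℝ) ≤ Real.log (1/p) := by
    rw [Real.le_log_iff_exp_le (by positivity)]
    calc Real.exp 1 ≤ 2.7182818286 := (Real.exp_one_lt_d9).le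
      _ ≤ 1/p := by linarith
  have hp1 : p ≤ 1/10 := hpp.le
  have hN₁ : 1 ≤ N₁ := by
    have h1 : (100:ℝ) * (1/p) * 1 ≤ 100 * (1/p) * Real.log (1/p) := by
      apply mul_le_mul_of_nonneg_left hlog (by positivity)
    have : (1:ℝ) ≤ (N₁:ℝ) := by nlinarith
    exact_mod_cast this
  have hN₂ : 30 ≤ N₂ := by
    have hinv2 : (100:ℝ) < 1/p^2 := by
      rw [lt_div_iff₀ (by positivity)]
      nlinarith
    have h1 : (100:ℝ) * (1/p^2) * 1 ≤ 100 * (1/p^2) * Real.log (1/p) := by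
      apply mul_le_mul_of_nonneg_left hlog (by positivity)
    have : (30:ℝ) ≤ (N₂:ℝ) := by nlinarith
    exact_mod_cast this
  -- term bounds
  have hbase0 : (0:ℝ) ≤ 1 - p^2 := by nlinarith
  have hbase1 : (1:ℝ) - p^2 ≤ 1 := by nlinarith
  have h1p0 : (0:ℝ) ≤ 1 - p := by linarith
  have h1p1 : (1:ℝ) - p ≤ 1 := by linarith
  set t : ℕ → ℝ := fun k => (1 - (1-p^2)^(N₂+k+1)) * (1 - (1-p)^(N₁+k+1)) with ht
  have ht0 : ∀ k, 0 ≤ t k := by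
    intro k
    apply mul_nonneg
    · have := pow_le_one₀ hbase0 hbase1 (n := N₂+k+1); linarith
    · have := pow_le_one₀ h1p0 h1p1 (n := N₁+k+1); linarith
  have ht1 : ∀ k, t k ≤ 1 := by
    intro k
    show (1 - (1-p^2)^(N₂+k+1)) * (1 - (1-p)^(N₁+k+1)) ≤ 1
    have ha := pow_nonneg hbase0 (N₂+k+1)
    have hb := pow_nonneg h1p0 (N₁+k+1)
    have ha' := pow_le_one₀ hbase0 hbase1 (n := N₂+k+1)
    have hb' := pow_le_one₀ h1p0 h1p1 (n := N₁+k+1)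
    nlinarith [mul_nonneg ha hb]
  -- events
  set Ek : ℕ → Set Config := fun k => SRow a b N₁ N₂ k ∩ SCol a b N₁ N₂ k with hEk
  set Reg : ℕ → Finset Site := fun k => rowRegion a b N₁ N₂ k ∪ colRegion a b N₁ N₂ k with hReg
  have hdetE : ∀ k, Det (Ek k) (Reg k) := fun k =>
    (det_SRow a b N₁ N₂ k).inter' (det_SCol a b N₁ N₂ k)
  have hdisjE : ∀ k k', k ≠ k' → Disjoint (Reg k) (Reg k') := by
    intro k k' hkk
    simp only [hReg]
    rw [Finset.disjoint_union_left]
    constructor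
    · rw [Finset.disjoint_union_right]
      exact ⟨disj_row_row a b N₁ N₂ hkk, disj_row_col a b N₁ N₂ k k'⟩
    · rw [Finset.disjoint_union_right]
      exact ⟨(disj_row_col a b N₁ N₂ k' k).symm, disj_col_col a b N₁ N₂ hkk⟩
  set Tn : ℕ → Set Config := fun n => ⋂ k ∈ Finset.range n, Ek k with hTn
  have hTnMeas : ∀ n, MeasurableSet (Tn n) := by
    intro n
    apply Finset.measurableSet_biInter
    intro k _
    exact (hdetE k).measurableSet
  have hTnAnti : Antitone Tn := by
    intro m n hmn
    simp only [hTn]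
    intro ω hω
    simp only [Set.mem_iInter, Finset.mem_range] at hω ⊢
    intro k hk
    exact hω k (by omega)
  have hbound : ∀ n, ENNReal.ofReal (∏' k, t k) ≤ μ (Tn n) := by
    intro n
    have hprod := prod_inter hμ Reg Ek hdetE hdisjE n
    rw [hTn, hprod]
    calc ENNReal.ofReal (∏' k, t k)
        ≤ ENNReal.ofReal (∏ k ∈ Finset.range n, t k) :=
          ENNReal.ofReal_le_ofReal (tprod_le_partial t ht0 ht1 n)
      _ = ∏ k ∈ Finset.range n, ENNReal.ofReal (t k) :=
          ENNReal.ofReal_prod_of_nonneg (fun i _ => ht0 i)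
      _ ≤ ∏ k ∈ Finset.range n, μ (Ek k) := by
          apply Finset.prod_le_prod'
          intro k _
          exact meas_stage_ge hμ hp hp1 a b N₁ N₂ k hN₂
  have htend := tendsto_measure_iInter_atTop (μ := μ)
    (fun n => (hTnMeas n).nullMeasurableSet) hTnAnti ⟨0, measure_ne_top μ _⟩
  have hlim : ENNReal.ofReal (∏' k, t k) ≤ μ (⋂ n, Tn n) :=
    ge_of_tendsto htend (Filter.Eventually.of_forall hbound)
  refine le_trans hlim (measure_mono ?_)
  intro ω hω
  simp only [Set.mem_iInter] at hω
  have hS : ∀ k, RowEv a b N₁ N₂ k ω ∧ ColEv a b N₁ N₂ k ω := by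
    intro k
    have := hω (k+1)
    simp only [hTn, Set.mem_iInter, Finset.mem_range] at this
    exact this k (by omega)
  exact master a b N₁ N₂ hN₁ hN₂ ω hS
end
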